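/- Fix N ≥ 2, real numbers λ_1 > λ_2 ≥ λ_3 ≥ … ≥ λ_N and real numbers c_1, …, c_N with ∑_{k=1}^{N} c_k² = 1, c_1 ≠ 0 and c_2 ≠ 0. Define D(t) = ∑_{k=1}^{N} c_k² e^{2λ_k t}, m(t) = (∑_{j} λ_j c_j² e^{2λ_j t})/D(t), E(t) = (∑_{j} (λ_j − m(t))² c_j² e^{2λ_j t})/D(t), and for ε > 0 the stopping time T(ε) = inf{ t ≥ 0 : E(t) ≤ ε² }. Then T(ε) is finite for every ε > 0, and T(ε)/log(ε⁻¹) → 1/(λ_1 − λ_2) as ε → 0⁺. -/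

import Mathlib

set_option maxHeartbeats 1000000


open Finset Filter

/-- **Asymptotics of the 1-deflation stopping time.**
Let `N ≥ 2`, `lam 0 > lam 1 ≥ lam 2 ≥ … ≥ lam (N-1)`, and let `c` be weights with
`∑ c k ^ 2 = 1`, `c 0 ≠ 0`, `c 1 ≠ 0`.  With `D`, `m`, `E` as in formulas (6)–(7)
and `T ε = inf {t ≥ 0 : E t ≤ ε²}`, the stopping time is finite for every `ε > 0`
(the defining set is nonempty) and `T ε / log ε⁻¹ → 1/(lam 0 - lam 1)` as `ε → 0⁺`. -/
theorem halting_time_asymptotics (N : ℕ) (hN : 2 ≤ N)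
    (lam c : Fin N → ℝ) (hc : ∑ k, (c k) ^ 2 = 1)
    (hgap : lam ⟨1, hN⟩ < lam ⟨0, by omega⟩)
    (hord : ∀ j k : Fin N, 1 ≤ (j : ℕ) → j ≤ k → lam k ≤ lam j)
    (hc1 : c ⟨0, by omega⟩ ≠ 0) (hc2 : c ⟨1, hN⟩ ≠ 0)
    (D : ℝ → ℝ) (hD : ∀ t, D t = ∑ k, (c k) ^ 2 * Real.exp (2 * lam k * t))
    (m : ℝ → ℝ)
    (hm : ∀ t, m t = (∑ j, lam j * (c j) ^ 2 * Real.exp (2 * lam j * t)) / D t)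
    (E : ℝ → ℝ)
    (hE : ∀ t, E t = (∑ j, (lam j - m t) ^ 2 * (c j) ^ 2 * Real.exp (2 * lam j * t)) / D t)
    (T : ℝ → ℝ) (hT : ∀ ε, T ε = sInf {t : ℝ | 0 ≤ t ∧ E t ≤ ε ^ 2}) :
    (∀ ε : ℝ, 0 < ε → {t : ℝ | 0 ≤ t ∧ E t ≤ ε ^ 2}.Nonempty) ∧
      Tendsto (fun ε => T ε / Real.log ε⁻¹) (nhdsWithin 0 (Set.Ioi 0))
        (nhds (1 / (lam ⟨0, by omega⟩ - lam ⟨1, hN⟩))) := by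
  have hN0 : 0 < N := by omega
  have hNL : N - 1 < N := by omega
  set i0 : Fin N := ⟨0, hN0⟩ with hi0def
  set i1 : Fin N := ⟨1, hN⟩ with hi1def
  set iL : Fin N := ⟨N - 1, hNL⟩ with hiLdef
  have hgap' : lam i1 < lam i0 := hgap
  have hc1' : c i0 ≠ 0 := hc1
  have hc2' : c i1 ≠ 0 := hc2
  set g : ℝ := lam i0 - lam i1 with hgdef
  have hg : 0 < g := by rw [hgdef]; exact sub_pos.mpr hgap'
  -- ordering facts
  have hlam1 : ∀ j : Fin N, 1 ≤ (j : ℕ) → lam j ≤ lam i1 := by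
    intro j hj
    exact hord i1 j le_rfl (by rw [Fin.le_def]; exact hj)
  have hlam0 : ∀ j : Fin N, lam j ≤ lam i0 := by
    intro j
    rcases Nat.eq_zero_or_pos (j : ℕ) with h | h
    · have hj : j = i0 := Fin.ext h
      rw [hj]
    · exact (hlam1 j h).trans hgap'.le
  have hlamL : ∀ j : Fin N, lam iL ≤ lam j := by
    intro j
    rcases Nat.eq_zero_or_pos (j : ℕ) with h | h
    · have hj : j = i0 := Fin.ext h
      rw [hj]
      exact ((hlam1 iL (by simp [hiLdef]; omega)).trans hgap'.le)
    · exact hord j iL h (by rw [Fin.le_def]; have := j.isLt; simp [hiLdef]; omega)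
  set M : ℝ := lam i0 - lam iL with hMdef
  have hM : 0 < M := by have := hlamL i1; rw [hMdef]; linarith
  have hc0sq : 0 < (c i0) ^ 2 := (sq_nonneg _).lt_of_ne (Ne.symm (pow_ne_zero 2 hc1'))
  have hc1sq : 0 < (c i1) ^ 2 := (sq_nonneg _).lt_of_ne (Ne.symm (pow_ne_zero 2 hc2'))
  clear_value g M
  have hDpos : ∀ t, 0 < D t := by
    intro t
    rw [hD]
    refine Finset.sum_pos' (fun j _ => by positivity) ⟨i0, Finset.mem_univ _, ?_⟩
    positivity
  have hDub : ∀ t : ℝ, 0 ≤ t → D t ≤ Real.exp (2 * lam i0 * t) := by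
    intro t ht
    rw [hD]
    calc ∑ k, (c k) ^ 2 * Real.exp (2 * lam k * t)
        ≤ ∑ k, (c k) ^ 2 * Real.exp (2 * lam i0 * t) := by
          refine Finset.sum_le_sum fun k _ => ?_
          exact mul_le_mul_of_nonneg_left
            (Real.exp_le_exp.mpr (by nlinarith [hlam0 k])) (sq_nonneg _)
      _ = Real.exp (2 * lam i0 * t) := by rw [← Finset.sum_mul, hc, one_mul]
  have hDlb : ∀ t : ℝ, (c i0) ^ 2 * Real.exp (2 * lam i0 * t) ≤ D t := by
    intro t
    rw [hD]
    exact Finset.single_le_sum (f := fun k => (c k) ^ 2 * Real.exp (2 * lam k * t))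
      (fun j _ => by positivity) (Finset.mem_univ i0)
  -- expansion identity
  have expand : ∀ t a : ℝ,
      (∑ j, (lam j - a) ^ 2 * (c j) ^ 2 * Real.exp (2 * lam j * t))
        = (∑ j, (lam j) ^ 2 * ((c j) ^ 2 * Real.exp (2 * lam j * t)))
          - 2 * a * (∑ j, lam j * ((c j) ^ 2 * Real.exp (2 * lam j * t)))
          + a ^ 2 * D t := by
    intro t a
    rw [hD, Finset.mul_sum, Finset.mul_sum, ← Finset.sum_sub_distrib,
      ← Finset.sum_add_distrib]
    exact Finset.sum_congr rfl fun j _ => by ring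
  set A : ℝ := min ((c i0) ^ 2) ((c i1) ^ 2) * g ^ 2 / 2 with hAdef
  set B : ℝ := M ^ 2 / (c i0) ^ 2 with hBdef
  have hA : 0 < A := by
    rw [hAdef]
    exact div_pos (mul_pos (lt_min hc0sq hc1sq) (pow_pos hg 2)) two_pos
  have hB : 0 < B := by
    rw [hBdef]
    exact div_pos (pow_pos hM 2) hc0sq
  clear_value A B
  -- Upper bound on E
  have key_upper : ∀ t : ℝ, 0 ≤ t → E t ≤ B * Real.exp (-(2 * g * t)) := by
    intro t ht
    set S1 : ℝ := ∑ j, lam j * ((c j) ^ 2 * Real.exp (2 * lam j * t)) with hS1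
    set S2 : ℝ := ∑ j, (lam j) ^ 2 * ((c j) ^ 2 * Real.exp (2 * lam j * t)) with hS2
    have hS0 := hDpos t
    have hmt : m t = S1 / D t := by
      rw [hm, hS1]
      congr 1
      exact Finset.sum_congr rfl fun j _ => by ring
    have hnum : E t * D t = S2 - 2 * (m t) * S1 + (m t) ^ 2 * D t := by
      rw [hS1, hS2, hE, div_mul_cancel₀ _ hS0.ne', expand t (m t)]
    clear_value S1 S2
    have h1 : E t * D t = S2 - S1 ^ 2 / D t := by
      rw [hnum, hmt]
      field_simp
      ring
    have h2 : E t * D t ≤ S2 - 2 * lam i0 * S1 + (lam i0) ^ 2 * D t := by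
      have h2a : 2 * lam i0 * S1 - (lam i0) ^ 2 * D t ≤ S1 ^ 2 / D t := by
        rw [le_div_iff₀ hS0]
        nlinarith [sq_nonneg (S1 - lam i0 * D t)]
      linarith [h1]
    have h3 : S2 - 2 * lam i0 * S1 + (lam i0) ^ 2 * D t
        ≤ M ^ 2 * Real.exp (2 * lam i1 * t) := by
      rw [hS1, hS2, ← expand t (lam i0)]
      calc ∑ j, (lam j - lam i0) ^ 2 * (c j) ^ 2 * Real.exp (2 * lam j * t)
          ≤ ∑ j, M ^ 2 * ((c j) ^ 2 * Real.exp (2 * lam i1 * t)) := by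
            refine Finset.sum_le_sum fun j _ => ?_
            rcases Nat.eq_zero_or_pos (j : ℕ) with h | h
            · have hj : j = i0 := Fin.ext h
              have h0 : (lam i0 - lam i0) ^ 2 * (c i0) ^ 2 * Real.exp (2 * lam i0 * t)
                  = 0 := by ring
              rw [hj, h0]
              positivity
            · have e1 : (lam j - lam i0) ^ 2 ≤ M ^ 2 := by
                nlinarith [hlamL j, hlam0 j, hMdef]
              have e2 : Real.exp (2 * lam j * t) ≤ Real.exp (2 * lam i1 * t) :=
                Real.exp_le_exp.mpr (by nlinarith [hlam1 j h])
              calc (lam j - lam i0) ^ 2 * (c j) ^ 2 * Real.exp (2 * lam j * t)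
                  = (lam j - lam i0) ^ 2 * ((c j) ^ 2 * Real.exp (2 * lam j * t)) := by ring
                _ ≤ M ^ 2 * ((c j) ^ 2 * Real.exp (2 * lam i1 * t)) := by
                    refine mul_le_mul e1 (mul_le_mul_of_nonneg_left e2 (sq_nonneg _))
                      (by positivity) (by positivity)
        _ = M ^ 2 * Real.exp (2 * lam i1 * t) := by
            rw [← Finset.mul_sum, ← Finset.sum_mul, hc, one_mul]
    have h4 : E t ≤ M ^ 2 * Real.exp (2 * lam i1 * t) / D t :=
      (le_div_iff₀ hS0).mpr (h2.trans h3)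
    have h5 : M ^ 2 * Real.exp (2 * lam i1 * t) / D t
        ≤ M ^ 2 * Real.exp (2 * lam i1 * t) / ((c i0) ^ 2 * Real.exp (2 * lam i0 * t)) :=
      div_le_div_of_nonneg_left (by positivity) (by positivity) (hDlb t)
    have h6 : M ^ 2 * Real.exp (2 * lam i1 * t) / ((c i0) ^ 2 * Real.exp (2 * lam i0 * t))
        = B * Real.exp (-(2 * g * t)) := by
      rw [hBdef, show -(2 * g * t) = 2 * lam i1 * t - 2 * lam i0 * t by rw [hgdef]; ring,
        Real.exp_sub]
      field_simp
      try ring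
    linarith [h4, h5, h6.le, h6.ge]
  -- Lower bound on E
  have key_lower : ∀ t : ℝ, 0 ≤ t → A * Real.exp (-(2 * g * t)) ≤ E t := by
    intro t ht
    have hS0 := hDpos t
    have h01 : i0 ≠ i1 := by simp [hi0def, hi1def, Fin.ext_iff]
    have hpair : (lam i0 - m t) ^ 2 * (c i0) ^ 2 * Real.exp (2 * lam i0 * t)
        + (lam i1 - m t) ^ 2 * (c i1) ^ 2 * Real.exp (2 * lam i1 * t)
        ≤ ∑ j, (lam j - m t) ^ 2 * (c j) ^ 2 * Real.exp (2 * lam j * t) := by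
      rw [show (lam i0 - m t) ^ 2 * (c i0) ^ 2 * Real.exp (2 * lam i0 * t)
        + (lam i1 - m t) ^ 2 * (c i1) ^ 2 * Real.exp (2 * lam i1 * t)
        = ∑ j ∈ ({i0, i1} : Finset (Fin N)),
            (lam j - m t) ^ 2 * (c j) ^ 2 * Real.exp (2 * lam j * t) from
        (Finset.sum_pair (f := fun j =>
          (lam j - m t) ^ 2 * (c j) ^ 2 * Real.exp (2 * lam j * t)) h01).symm]
      exact Finset.sum_le_sum_of_subset_of_nonneg (Finset.subset_univ _)
        (fun j _ _ => by positivity)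
    have e01 : Real.exp (2 * lam i1 * t) ≤ Real.exp (2 * lam i0 * t) :=
      Real.exp_le_exp.mpr (by nlinarith [hgap'.le])
    set x : ℝ := lam i0 - m t with hx
    set y : ℝ := lam i1 - m t with hy
    have hxy : x - y = g := by rw [hx, hy, hgdef]; ring
    clear_value x y
    have hg2 : g ^ 2 = x ^ 2 - 2 * (x * y) + y ^ 2 := by rw [← hxy]; ring
    have h1 : g ^ 2 / 2 ≤ x ^ 2 + y ^ 2 := by nlinarith [sq_nonneg (x + y), hg2]
    set μ : ℝ := min ((c i0) ^ 2) ((c i1) ^ 2) with hμ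
    have hμ0 : 0 < μ := by rw [hμ]; exact lt_min hc0sq hc1sq
    have hμ1 : μ ≤ (c i0) ^ 2 := by rw [hμ]; exact min_le_left _ _
    have hμ2 : μ ≤ (c i1) ^ 2 := by rw [hμ]; exact min_le_right _ _
    clear_value μ
    have h2 : μ * (x ^ 2 + y ^ 2) ≤ (c i0) ^ 2 * x ^ 2 + (c i1) ^ 2 * y ^ 2 := by
      nlinarith [sq_nonneg x, sq_nonneg y]
    have h3 : μ * (g ^ 2 / 2) * Real.exp (2 * lam i1 * t)
        ≤ x ^ 2 * (c i0) ^ 2 * Real.exp (2 * lam i0 * t)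
          + y ^ 2 * (c i1) ^ 2 * Real.exp (2 * lam i1 * t) := by
      have e1pos : (0:ℝ) < Real.exp (2 * lam i1 * t) := Real.exp_pos _
      have b1 : μ * (g ^ 2 / 2) * Real.exp (2 * lam i1 * t)
          ≤ μ * (x ^ 2 + y ^ 2) * Real.exp (2 * lam i1 * t) := by
        have := mul_le_mul_of_nonneg_right (mul_le_mul_of_nonneg_left h1 hμ0.le) e1pos.le
        linarith
      have b2 : μ * (x ^ 2 + y ^ 2) * Real.exp (2 * lam i1 * t)
          ≤ ((c i0) ^ 2 * x ^ 2 + (c i1) ^ 2 * y ^ 2) * Real.exp (2 * lam i1 * t) :=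
        mul_le_mul_of_nonneg_right h2 e1pos.le
      have b3 : ((c i0) ^ 2 * x ^ 2 + (c i1) ^ 2 * y ^ 2) * Real.exp (2 * lam i1 * t)
          ≤ x ^ 2 * (c i0) ^ 2 * Real.exp (2 * lam i0 * t)
            + y ^ 2 * (c i1) ^ 2 * Real.exp (2 * lam i1 * t) := by
        have := mul_le_mul_of_nonneg_left e01 (by positivity : (0:ℝ) ≤ (c i0) ^ 2 * x ^ 2)
        nlinarith
      exact b1.trans (b2.trans b3)
    have hnumlb : μ * (g ^ 2 / 2) * Real.exp (2 * lam i1 * t)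
        ≤ ∑ j, (lam j - m t) ^ 2 * (c j) ^ 2 * Real.exp (2 * lam j * t) :=
      h3.trans hpair
    have step : A * Real.exp (-(2 * g * t))
        = μ * (g ^ 2 / 2) * Real.exp (2 * lam i1 * t) / Real.exp (2 * lam i0 * t) := by
      rw [hAdef, show -(2 * g * t) = 2 * lam i1 * t - 2 * lam i0 * t by rw [hgdef]; ring,
        Real.exp_sub]
      ring
    rw [step, hE]
    calc μ * (g ^ 2 / 2) * Real.exp (2 * lam i1 * t) / Real.exp (2 * lam i0 * t)
        ≤ (∑ j, (lam j - m t) ^ 2 * (c j) ^ 2 * Real.exp (2 * lam j * t))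
            / Real.exp (2 * lam i0 * t) :=
          div_le_div_of_nonneg_right hnumlb (Real.exp_pos _).le
      _ ≤ (∑ j, (lam j - m t) ^ 2 * (c j) ^ 2 * Real.exp (2 * lam j * t)) / D t :=
          div_le_div_of_nonneg_left
            (Finset.sum_nonneg fun j _ => by positivity) hS0 (hDub t ht)
  -- membership witness
  have hmem : ∀ ε : ℝ, 0 < ε →
      max 0 ((Real.log B + 2 * Real.log ε⁻¹) / (2 * g)) ∈ {t : ℝ | 0 ≤ t ∧ E t ≤ ε ^ 2} := by
    intro ε hε
    set t0 : ℝ := max 0 ((Real.log B + 2 * Real.log ε⁻¹) / (2 * g)) with ht0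
    have ht00 : 0 ≤ t0 := by rw [ht0]; exact le_max_left _ _
    have hmax : (Real.log B + 2 * Real.log ε⁻¹) / (2 * g) ≤ t0 := by
      rw [ht0]; exact le_max_right _ _
    clear_value t0
    refine ⟨ht00, ?_⟩
    have h1 : E t0 ≤ B * Real.exp (-(2 * g * t0)) := key_upper t0 ht00
    have h2 : B * Real.exp (-(2 * g * t0)) ≤ ε ^ 2 := by
      have hεB : (0:ℝ) < ε ^ 2 / B := by positivity
      rw [div_le_iff₀ (by positivity : (0:ℝ) < 2 * g)] at hmax
      have hli : Real.log ε⁻¹ = -Real.log ε := Real.log_inv ε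
      have h3 : Real.exp (-(2 * g * t0)) ≤ ε ^ 2 / B := by
        rw [show ε ^ 2 / B = Real.exp (Real.log (ε ^ 2 / B)) from (Real.exp_log hεB).symm,
          Real.exp_le_exp, Real.log_div (by positivity) hB.ne', Real.log_pow]
        push_cast
        nlinarith [hmax, hli]
      calc B * Real.exp (-(2 * g * t0)) ≤ B * (ε ^ 2 / B) :=
            mul_le_mul_of_nonneg_left h3 hB.le
        _ = ε ^ 2 := by field_simp
    exact h1.trans h2
  have hbdd : ∀ ε : ℝ, BddBelow {t : ℝ | 0 ≤ t ∧ E t ≤ ε ^ 2} :=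
    fun ε => ⟨0, fun x hx => hx.1⟩
  have hTub : ∀ ε : ℝ, 0 < ε →
      T ε ≤ max 0 ((Real.log B + 2 * Real.log ε⁻¹) / (2 * g)) := by
    intro ε hε
    rw [hT]
    exact csInf_le (hbdd ε) (hmem ε hε)
  have hTlb : ∀ ε : ℝ, 0 < ε →
      (Real.log A + 2 * Real.log ε⁻¹) / (2 * g) ≤ T ε := by
    intro ε hε
    rw [hT]
    refine le_csInf ⟨_, hmem ε hε⟩ ?_
    rintro t ⟨ht0, htE⟩
    have h1 : A * Real.exp (-(2 * g * t)) ≤ ε ^ 2 := (key_lower t ht0).trans htE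
    have h2 : Real.exp (-(2 * g * t)) ≤ ε ^ 2 / A := by
      rw [le_div_iff₀ hA]
      linarith [h1]
    have h3 : -(2 * g * t) ≤ Real.log (ε ^ 2 / A) := by
      rw [Real.le_log_iff_exp_le (by positivity)]
      exact h2
    rw [Real.log_div (by positivity) hA.ne', Real.log_pow] at h3
    have hli : Real.log ε⁻¹ = -Real.log ε := Real.log_inv ε
    rw [div_le_iff₀ (by positivity : (0:ℝ) < 2 * g)]
    push_cast at h3
    nlinarith [h3, hli]
  -- limit computations
  have hloginv : Tendsto (fun ε : ℝ => Real.log ε⁻¹) (nhdsWithin 0 (Set.Ioi 0)) atTop :=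
    Real.tendsto_log_atTop.comp tendsto_inv_nhdsGT_zero
  have hlim : ∀ K : ℝ, Tendsto (fun ε : ℝ => (K + 2 * Real.log ε⁻¹) / (2 * g) / Real.log ε⁻¹)
      (nhdsWithin 0 (Set.Ioi 0)) (nhds (1 / g)) := by
    intro K
    have h1 : Tendsto (fun x : ℝ => (K + 2 * x) / (2 * g) / x) atTop (nhds (1 / g)) := by
      have h2 : Tendsto (fun x : ℝ => K / (2 * g) * x⁻¹ + 1 / g) atTop
          (nhds (K / (2 * g) * 0 + 1 / g)) :=
        (tendsto_const_nhds.mul tendsto_inv_atTop_zero).add tendsto_const_nhds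
      rw [mul_zero, zero_add] at h2
      apply h2.congr'
      filter_upwards [eventually_ne_atTop (0:ℝ)] with x hx
      field_simp
    exact h1.comp hloginv
  constructor
  · exact fun ε hε => ⟨_, hmem ε hε⟩
  · have hgoal : Tendsto (fun ε : ℝ => T ε / Real.log ε⁻¹) (nhdsWithin 0 (Set.Ioi 0))
        (nhds (1 / g)) := by
      refine tendsto_of_tendsto_of_tendsto_of_le_of_le' (hlim (Real.log A)) (hlim (Real.log B))
        ?_ ?_
      · filter_upwards [hloginv.eventually (eventually_gt_atTop 0), self_mem_nhdsWithin]
          with ε h1 h2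
        have := hTlb ε h2
        gcongr
      · filter_upwards [hloginv.eventually
          (eventually_ge_atTop (max 1 (-(Real.log B) / 2 + 1))), self_mem_nhdsWithin]
          with ε h1 h2
        have hpos : 0 < Real.log ε⁻¹ :=
          lt_of_lt_of_le one_pos ((le_max_left _ _).trans h1)
        have hXnn : 0 ≤ (Real.log B + 2 * Real.log ε⁻¹) / (2 * g) := by
          refine div_nonneg ?_ (by positivity)
          have := (le_max_right 1 (-(Real.log B) / 2 + 1)).trans h1
          linarith
        have hub : T ε ≤ (Real.log B + 2 * Real.log ε⁻¹) / (2 * g) := by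
          have := hTub ε h2
          rwa [max_eq_right hXnn] at this
        gcongr
    exact hgoal
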